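/- Let A be a principal ideal domain with fraction field F, let L be a separable quadratic field extension of F, let B be the integral closure of A in L, and let O be an A-subalgebra of B containing a basis of L over F (equivalently O ⊗_A F = L). Then O is a free A-module of rank 2 admitting a basis of the form (1, α) for some α ∈ O, and O = A[α], the A-subalgebra generated by α. -/

import Mathlib

/-- Let `A` be a principal ideal domain with fraction field `F`, `L` a separable quadratic
field extension of `F`, `B` the integral closure of `A` in `L`, and `O` an `A`-subalgebra
of `B` with `O ⊗_A F = L` (i.e. `O` spans `L` over `F`).  Then `O` is a free `A`-module of
rank 2 with a basis of the form `(1, α)` for some `α ∈ O`, and `O = A[α]`. -/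
theorem quadratic_order_monogenic (A F L : Type*) [CommRing A] [IsDomain A]
    [IsPrincipalIdealRing A] [Field F] [Algebra A F] [IsFractionRing A F]
    [Field L] [Algebra F L] [Algebra A L] [IsScalarTower A F L]
    [Algebra.IsSeparable F L] (h2 : Module.finrank F L = 2)
    (O : Subalgebra A L) (hOB : O ≤ integralClosure A L)
    (hspan : Submodule.span F (O : Set L) = ⊤) :
    ∃ α : L, α ∈ O ∧
      (∃ b : Module.Basis (Fin 2) A O, ((b 0 : O) : L) = 1 ∧ ((b 1 : O) : L) = α) ∧
      O = Algebra.adjoin A {α} := by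
  haveI : FiniteDimensional F L := Module.finite_of_finrank_eq_succ (n := 1) h2
  have hALinj : Function.Injective (algebraMap A L) := by
    rw [IsScalarTower.algebraMap_eq A F L]
    exact (algebraMap F L).injective.comp (IsFractionRing.injective A F)
  -- O is a finite A-module
  haveI hNoeth : IsNoetherian A (integralClosure A L) :=
    IsIntegralClosure.isNoetherian A F L (integralClosure A L)
  have hfg : O.toSubmodule.FG := by
    have hle : O.toSubmodule ≤ Subalgebra.toSubmodule (integralClosure A L) := hOB
    haveI : IsNoetherian A (Subalgebra.toSubmodule (integralClosure A L)) := hNoeth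
    have hN : (O.toSubmodule.comap
        (Subalgebra.toSubmodule (integralClosure A L)).subtype).FG :=
      IsNoetherian.noetherian _
    have := hN.map (Subalgebra.toSubmodule (integralClosure A L)).subtype
    rwa [Submodule.map_comap_subtype, inf_eq_right.mpr hle] at this
  haveI : Module.Finite A O := Module.Finite.iff_fg.mpr hfg
  haveI : NoZeroSMulDivisors A O := by
    refine ⟨fun {a x} h => ?_⟩
    have hL : algebraMap A L a * (x : L) = 0 := by
      have := congrArg (Subtype.val) h
      simpa [Algebra.smul_def] using this
    rcases mul_eq_zero.mp hL with h' | h'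
    · exact Or.inl (hALinj (by simpa using h'))
    · exact Or.inr (Subtype.ext (by simpa using h'))
  haveI : Module.Free A O := Module.free_of_finite_type_torsion_free'
  -- rank of O is 2
  have hn : Module.finrank A O = 2 := by
    set n := Module.finrank A O with hn'
    let b0 := Module.finBasis A O
    have hli : LinearIndependent A (fun i : Fin n => ((b0 i : O) : L)) :=
      b0.linearIndependent.map' O.toSubmodule.subtype (Submodule.ker_subtype _)
    have hliF : LinearIndependent F (fun i : Fin n => ((b0 i : O) : L)) :=
      (LinearIndependent.iff_fractionRing A F).mp hli
    have hspF : ⊤ ≤ Submodule.span F (Set.range fun i : Fin n => ((b0 i : O) : L)) := by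
      rw [← hspan, Submodule.span_le]
      intro z hz
      have hzA : z ∈ Submodule.span A (Set.range fun i : Fin n => ((b0 i : O) : L)) := by
        have hz' : (⟨z, hz⟩ : O) ∈ Submodule.span A (Set.range b0) := by
          rw [b0.span_eq]; trivial
        have := Submodule.mem_map_of_mem (f := O.toSubmodule.subtype) hz'
        rwa [Submodule.map_span, ← Set.range_comp] at this
      exact Submodule.span_subset_span A F _ hzA
    have : Module.finrank F L = n := by
      rw [Module.finrank_eq_card_basis (Module.Basis.mk hliF hspF), Fintype.card_fin]
    rw [← this, h2]
  let bO : Module.Basis (Fin 2) A O := Module.finBasisOfFinrankEq A O hn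
  set e0 := bO 0 with he0
  set e1 := bO 1 with he1
  set r0 := bO.repr 1 0 with hr0
  set r1 := bO.repr 1 1 with hr1
  have h1repr : (1 : O) = r0 • e0 + r1 • e1 := by
    have := bO.sum_repr 1
    rw [Fin.sum_univ_two] at this
    exact this.symm
  have key : ∀ c d : A, c • e0 + d • e1 = 0 → c = 0 ∧ d = 0 := by
    intro c d h
    have h' := Fintype.linearIndependent_iff.mp bO.linearIndependent ![c, d]
      (by simpa [Fin.sum_univ_two] using h)
    exact ⟨h' 0, h' 1⟩
  -- gcd argument: find x' y' with r0 * x' + r1 * y' = 1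
  obtain ⟨x', y', hxy⟩ : ∃ x' y', r0 * x' + r1 * y' = 1 := by
    obtain ⟨g, hg0⟩ := Submodule.IsPrincipal.principal (Ideal.span {r0, r1})
    have hg : Ideal.span {r0, r1} = Ideal.span {g} := hg0
    have hr0m : r0 ∈ Ideal.span {g} := by
      rw [← hg]; exact Ideal.subset_span (Set.mem_insert _ _)
    have hr1m : r1 ∈ Ideal.span {g} := by
      rw [← hg]; exact Ideal.subset_span (Set.mem_insert_of_mem _ rfl)
    obtain ⟨a0, ha0⟩ := Ideal.mem_span_singleton'.mp hr0m
    obtain ⟨a1, ha1⟩ := Ideal.mem_span_singleton'.mp hr1m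
    obtain ⟨x, y, hpair⟩ := Ideal.mem_span_pair.mp (hg ▸ Ideal.mem_span_singleton_self g)
    set w : O := a0 • e0 + a1 • e1 with hw
    have hgw : g • w = 1 := by
      rw [hw, h1repr]
      match_scalars
      · linear_combination ha0
      · linear_combination ha1
    have hgne : g ≠ 0 := by
      rintro rfl
      rw [zero_smul] at hgw
      have h0 : (0 : L) = 1 := by simpa using congrArg Subtype.val hgw
      exact zero_ne_one h0
    have hwL : algebraMap F L (algebraMap A F g) * (w : L) = 1 := by
      have h := congrArg Subtype.val hgw
      rw [← IsScalarTower.algebraMap_apply]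
      simpa [Algebra.smul_def] using h
    have hgFne : algebraMap A F g ≠ 0 := fun h =>
      hgne (IsFractionRing.injective A F (by simpa using h))
    have hwF : (w : L) = algebraMap F L (algebraMap A F g)⁻¹ := by
      rw [map_inv₀]
      exact eq_inv_of_mul_eq_one_right hwL
    have hwInt : IsIntegral A (w : L) := hOB w.2
    have hcInt : IsIntegral A ((algebraMap A F g)⁻¹) :=
      (isIntegral_algebraMap_iff (algebraMap F L).injective).mp (hwF ▸ hwInt)
    obtain ⟨u, hu⟩ := IsIntegrallyClosed.isIntegral_iff.mp hcInt
    have hug : g * u = 1 := by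
      apply IsFractionRing.injective A F
      rw [map_mul, map_one, hu, mul_inv_cancel₀ hgFne]
    exact ⟨u * x, u * y, by linear_combination u * hpair + hug⟩
  -- the basis (1, α)
  set αO : O := (-y') • e0 + x' • e1 with hαO
  have hliv : LinearIndependent A ![(1 : O), αO] := by
    rw [LinearIndependent.pair_iff]
    intro s t hst
    have hst' : (s * r0 - t * y') • e0 + (s * r1 + t * x') • e1 = 0 := by
      rw [← hst, h1repr, hαO]
      module
    obtain ⟨hc, hd⟩ := key _ _ hst'
    constructor
    · linear_combination x' * hc + y' * hd - s * hxy
    · linear_combination r0 * hd - r1 * hc - t * hxy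
  have hspv : ⊤ ≤ Submodule.span A (Set.range ![(1 : O), αO]) := by
    have hrange : Set.range ![(1 : O), αO] = {(1 : O), αO} := by
      ext z
      simp [Fin.exists_fin_two, or_comm]
    rw [hrange, ← bO.span_eq]
    apply Submodule.span_le.mpr
    rintro _ ⟨i, rfl⟩
    fin_cases i
    · show e0 ∈ Submodule.span A {(1 : O), αO}
      refine Submodule.mem_span_pair.mpr ⟨x', -r1, ?_⟩
      rw [h1repr, hαO]
      match_scalars
      · linear_combination hxy
      · ring
    · show e1 ∈ Submodule.span A {(1 : O), αO}
      refine Submodule.mem_span_pair.mpr ⟨y', r0, ?_⟩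
      rw [h1repr, hαO]
      match_scalars
      · ring
      · linear_combination hxy
  let b : Module.Basis (Fin 2) A O := Module.Basis.mk hliv hspv
  refine ⟨(αO : L), αO.2, ⟨b, ?_, ?_⟩, ?_⟩
  · simp [b, Module.Basis.mk_apply]
  · simp [b, Module.Basis.mk_apply]
  · apply le_antisymm
    · intro z hz
      have hz2 := b.sum_repr ⟨z, hz⟩
      rw [Fin.sum_univ_two] at hz2
      have hzL : z = (b.repr ⟨z, hz⟩ 0) • (1 : L) + (b.repr ⟨z, hz⟩ 1) • (αO : L) := by
        have h := congrArg Subtype.val hz2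
        simpa [b, Module.Basis.mk_apply] using h.symm
      rw [hzL]
      exact Subalgebra.add_mem _
        (Subalgebra.smul_mem _ (one_mem _) _)
        (Subalgebra.smul_mem _ (Algebra.self_mem_adjoin_singleton A _) _)
    · exact Algebra.adjoin_le (Set.singleton_subset_iff.mpr αO.2)
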